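/- Let (G, E, φ) be a self-similar graph with quotient graph Ẽ. Then every G-circuit in E has an entry if and only if every circuit in Ẽ has an entry. Here a path γ in E has an entry if |r⁻¹(r(γᵢ))| > 1 for some i, and similarly for Ẽ. -/

import Mathlib

/-- Lifting lemma: a chain in the quotient graph lifts to a chain in `E`,
with a prescribed group element translating the first edge. -/
lemma exists_lift_chain {G E V : Type*} [Group G]
    (r d : E → V) (aE : G → E → E) (aV : G → V → V)
    (haV_mul : ∀ g h v, aV (g * h) v = aV g (aV h v))
    (hr : ∀ g e, r (aE g e) = aV g (r e))
    (hd : ∀ g e, d (aE g e) = aV g (d e))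
    (rep : V → V)
    (hrep_orbit : ∀ v, ∃ g : G, rep v = aV g v) :
    ∀ (α : List E), List.Chain' (fun e f => rep (d e) = r f) α → ∀ h : G,
      ∃ gs : List G, gs.length = α.length ∧
        (∀ hne : gs ≠ [], gs.head hne = h) ∧
        List.Chain' (fun e f => d e = r f) (List.zipWith aE gs α) := by
  intro α
  induction α with
  | nil => exact fun _ h => ⟨[], rfl, by simp, List.isChain_nil⟩
  | cons a rest ih =>
    intro hch h
    cases rest with
    | nil => exact ⟨[h], rfl, by simp, List.isChain_singleton _⟩
    | cons b t =>
      rw [List.Chain', List.isChain_cons_cons] at hch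
      obtain ⟨hab, hch'⟩ := hch
      obtain ⟨k, hk⟩ := hrep_orbit (d a)
      obtain ⟨gs', hlen, hhead, hchain⟩ := ih hch' (h * k⁻¹)
      have hgs'ne : gs' ≠ [] := by
        intro h0; rw [h0] at hlen; simp at hlen
      cases gs' with
      | nil => exact absurd rfl hgs'ne
      | cons g1 gs'' =>
        have hg1 : g1 = h * k⁻¹ := hhead (by simp)
        refine ⟨h :: g1 :: gs'', by simpa using hlen, by simp, ?_⟩
        rw [show List.zipWith aE (h :: g1 :: gs'') (a :: b :: t)
            = aE h a :: aE g1 b :: List.zipWith aE gs'' t from rfl,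
          List.Chain', List.isChain_cons_cons]
        constructor
        · have hrb : r b = aV k (d a) := by rw [← hk, hab]
          rw [hd, hr, hrb, hg1, ← haV_mul]
          congr 1
          group
        · exact hchain

theorem GCircuit_entry_iff_quotient_circuit_entry {G E V : Type*} [Group G]
    (r d : E → V) (aE : G → E → E) (aV : G → V → V)
    (haE_one : ∀ e, aE 1 e = e)
    (haE_mul : ∀ g h e, aE (g * h) e = aE g (aE h e))
    (haV_one : ∀ v, aV 1 v = v)
    (haV_mul : ∀ g h v, aV (g * h) v = aV g (aV h v))
    (hr : ∀ g e, r (aE g e) = aV g (r e))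
    (hd : ∀ g e, d (aE g e) = aV g (d e))
    (Ω : Set V) (rep : V → V)
    (hrepΩ : ∀ v, rep v ∈ Ω)
    (hrep_orbit : ∀ v, ∃ g : G, rep v = aV g v)
    (hrep_unique : ∀ v w, w ∈ Ω → (∃ g : G, w = aV g v) → rep v = w) :
    -- every `G`-circuit in `E` has an entry ...
    (∀ (γ : List E) (hne : γ ≠ []),
        List.Chain' (fun e f => d e = r f) γ →
        (∃ g : G, d (γ.getLast hne) = aV g (r (γ.head hne))) →
        ∃ i : Fin γ.length, ∃ e f : E, e ≠ f ∧ r e = r (γ.get i) ∧ r f = r (γ.get i)) ↔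
    -- ... iff every circuit in `Ẽ` has an entry:
    (∀ (α : List E) (hne : α ≠ []),
        (∀ e ∈ α, r e ∈ Ω) →
        List.Chain' (fun e f => rep (d e) = r f) α →
        rep (d (α.getLast hne)) = r (α.head hne) →
        ∃ i : Fin α.length, ∃ e f : E, e ≠ f ∧ r e = r (α.get i) ∧ r f = r (α.get i)) := by
  -- basic action facts
  have haV_cancel : ∀ (g : G) v, aV g⁻¹ (aV g v) = v := fun g v => by
    rw [← haV_mul, inv_mul_cancel, haV_one]
  have haE_inj : ∀ (g : G) {e f : E}, aE g e = aE g f → e = f := by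
    intro g e f hef
    have := congrArg (aE g⁻¹) hef
    rwa [← haE_mul, ← haE_mul, inv_mul_cancel, haE_one, haE_one] at this
  have hrep_inv : ∀ (g : G) v, rep (aV g v) = rep v := by
    intro g v
    obtain ⟨k, hk⟩ := hrep_orbit v
    refine hrep_unique (aV g v) (rep v) (hrepΩ v) ⟨k * g⁻¹, ?_⟩
    rw [haV_mul, haV_cancel, hk]
  constructor
  · -- forward
    intro H α hne hΩ hch hcirc
    obtain ⟨gs, hlen, hhead, hchain⟩ := exists_lift_chain r d aE aV haV_mul hr hd
      rep hrep_orbit α hch 1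
    set γ := List.zipWith aE gs α with hγ
    have hγlen : γ.length = α.length := by simp [hγ, hlen]
    have hαpos : 0 < α.length := List.length_pos_iff.mpr hne
    have hγne : γ ≠ [] := by
      intro h0; rw [h0] at hγlen; simp at hγlen; omega
    have hget : ∀ (i : ℕ) (hi : i < α.length),
        γ[i]'(by omega) = aE (gs[i]'(by omega)) (α[i]'hi) := by
      intro i hi; exact List.getElem_zipWith
    have hgsne : gs ≠ [] := by intro h0; rw [h0] at hlen; simp at hlen; omega
    -- head of γ
    have hgs0 : gs[0]'(by rw [hlen]; omega) = 1 := by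
      have := hhead hgsne
      rwa [List.head_eq_getElem hgsne] at this
    have hγhead : γ.head hγne = α.head hne := by
      rw [List.head_eq_getElem hγne, List.head_eq_getElem hne, hget 0 hαpos, hgs0, haE_one]
    -- last of γ
    have hγlast : γ.getLast hγne
        = aE (gs[α.length - 1]'(by omega)) (α[α.length - 1]'(by omega)) := by
      rw [List.getLast_eq_getElem hγne]
      simp only [hγlen]
      exact hget _ (by omega)
    have hαlast : α.getLast hne = α[α.length - 1]'(by omega) :=
      List.getLast_eq_getElem hne
    -- G-circuit condition
    obtain ⟨k, hk⟩ := hrep_orbit (d (α.getLast hne))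
    have hdl : d (α.getLast hne) = aV k⁻¹ (r (α.head hne)) := by
      rw [← hcirc, hk, haV_cancel]
    have hcircγ : ∃ g : G, d (γ.getLast hγne) = aV g (r (γ.head hγne)) := by
      refine ⟨(gs[α.length - 1]'(by omega)) * k⁻¹, ?_⟩
      rw [hγlast, hd, hγhead, ← hαlast, hdl, haV_mul]
    obtain ⟨i, e, f, hef, he, hf⟩ := H γ hγne hchain hcircγ
    have hi : (i : ℕ) < α.length := by have := i.2; omega
    have hγi : γ.get i = aE (gs[(i : ℕ)]'(by omega)) (α[(i : ℕ)]'hi) := by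
      rw [List.get_eq_getElem]; exact hget i hi
    refine ⟨⟨i, hi⟩, aE (gs[(i : ℕ)]'(by omega))⁻¹ e, aE (gs[(i : ℕ)]'(by omega))⁻¹ f,
      fun h0 => hef (haE_inj _ h0), ?_, ?_⟩
    · rw [hr, he, hγi, hr, haV_cancel, List.get_eq_getElem]
    · rw [hr, hf, hγi, hr, haV_cancel, List.get_eq_getElem]
  · -- backward
    intro H γ hne hch hcirc
    choose g hg using fun e => hrep_orbit (r e)
    have hαne : γ.map (fun e => aE (g e) e) ≠ [] := by simp [hne]
    have hαlen : (γ.map (fun e => aE (g e) e)).length = γ.length := by simp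
    have hrF : ∀ e, r (aE (g e) e) = rep (r e) := fun e => by rw [hr, ← hg]
    have hdF : ∀ e, rep (d (aE (g e) e)) = rep (d e) := fun e => by rw [hd, hrep_inv]
    have hγhead : (γ.map (fun e => aE (g e) e)).head hαne = aE (g (γ.head hne)) (γ.head hne) := by
      rw [List.head_eq_getElem hαne, List.head_eq_getElem hne, List.getElem_map]
    have hγlast : (γ.map (fun e => aE (g e) e)).getLast hαne
        = aE (g (γ.getLast hne)) (γ.getLast hne) := by
      rw [List.getLast_eq_getElem hαne, List.getLast_eq_getElem hne]
      simp only [List.length_map]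
      rw [List.getElem_map]
    obtain ⟨gg, hgg⟩ := hcirc
    obtain ⟨i, e, f, hef, he, hf⟩ := H (γ.map (fun e => aE (g e) e)) hαne
      (by
        intro e he
        obtain ⟨x, _, rfl⟩ := List.mem_map.mp he
        rw [hrF]; exact hrepΩ _)
      (by
        rw [List.Chain', List.isChain_map]
        exact hch.imp fun a b hab => by rw [hdF, hrF, hab])
      (by rw [hγlast, hγhead, hdF, hgg, hrep_inv, hrF])
    have hi : (i : ℕ) < γ.length := by have := i.2; omega
    have hgetα : (γ.map (fun e => aE (g e) e)).get i
        = aE (g (γ[(i : ℕ)]'hi)) (γ[(i : ℕ)]'hi) := by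
      rw [List.get_eq_getElem, List.getElem_map]
    refine ⟨⟨i, hi⟩, aE (g (γ[(i : ℕ)]'hi))⁻¹ e, aE (g (γ[(i : ℕ)]'hi))⁻¹ f,
      fun h0 => hef (haE_inj _ h0), ?_, ?_⟩
    · rw [hr, he, hgetα, hr, haV_cancel, List.get_eq_getElem]
    · rw [hr, hf, hgetα, hr, haV_cancel, List.get_eq_getElem]
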